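/- Let M ⊂ ℝⁿ be a compact convex set of width w, let x₁,...,x_k ∈ M with k ≥ n, and let H be the supremum of widths of planks P whose two bounding hyperplanes both intersect M and whose open interior contains none of the points xᵢ. Then H ≥ w/(k-n+2). -/

import Mathlib

open scoped RealInnerProductSpace

variable {n : ℕ}

-- gap lemma
lemma gap_lemma (S : Finset ℝ) : ∀ (A B : ℝ), A ≤ B → (∀ s ∈ S, A ≤ s ∧ s ≤ B) →
    ∃ a b, a ≤ b ∧ B - A ≤ ((S.card : ℝ) + 1) * (b - a) ∧ (a = A ∨ a ∈ S) ∧ (b = B ∨ b ∈ S) ∧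
      ∀ s ∈ S, ¬(a < s ∧ s < b) := by
  induction S using Finset.strongInduction with
  | _ S ih =>
    intro A B hAB hS
    rcases S.eq_empty_or_nonempty with rfl | hne
    · exact ⟨A, B, hAB, by simp, Or.inl rfl, Or.inl rfl, by simp⟩
    · set c := S.max' hne with hc_def
      have hc : c ∈ S := S.max'_mem hne
      have hcB : c ≤ B := (hS c hc).2
      have hAc : A ≤ c := (hS c hc).1
      by_cases hbig : B - A ≤ ((S.card : ℝ) + 1) * (B - c)
      · refine ⟨c, B, hcB, hbig, Or.inr hc, Or.inl rfl, ?_⟩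
        rintro s hs ⟨h1, _⟩
        exact absurd (S.le_max' s hs) (not_le.2 h1)
      · obtain ⟨a, b, hab, hlen, ha, hb, hgap⟩ := ih (S.erase c) (Finset.erase_ssubset hc) A c hAc
          (fun s hs => ⟨(hS s (Finset.mem_of_mem_erase hs)).1,
            S.le_max' s (Finset.mem_of_mem_erase hs)⟩)
        have hcard : S.card = (S.erase c).card + 1 := (Finset.card_erase_add_one hc).symm
        have hbc : b ≤ c := by
          rcases hb with rfl | hb
          · exact le_refl _
          · exact S.le_max' b (Finset.mem_of_mem_erase hb)
        refine ⟨a, b, hab, ?_, ha.imp id Finset.mem_of_mem_erase,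
          Or.inr (hb.elim (fun h => h ▸ hc) Finset.mem_of_mem_erase), ?_⟩
        · push_neg at hbig
          set m : ℝ := ((S.erase c).card : ℝ) with hm
          have hm0 : (0:ℝ) ≤ m := Nat.cast_nonneg _
          have hScard : (S.card : ℝ) = m + 1 := by rw [hcard]; push_cast; ring
          rw [hScard] at hbig ⊢
          nlinarith [hlen, hbig, hm0]
        · rintro s hs ⟨h1, h2⟩
          rcases eq_or_ne s c with rfl | hsc
          · exact absurd (lt_of_lt_of_le h2 hbc) (lt_irrefl _)
          · exact hgap s (Finset.mem_erase.2 ⟨hsc, hs⟩) ⟨h1, h2⟩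

lemma exists_ortho (hn : 1 ≤ n) {k : ℕ} (hk : n ≤ k) (x : Fin k → EuclideanSpace ℝ (Fin n)) :
    ∃ u : EuclideanSpace ℝ (Fin n), ‖u‖ = 1 ∧
      ∀ i j : Fin n, ⟪u, x (Fin.castLE hk i)⟫ = ⟪u, x (Fin.castLE hk j)⟫ := by
  classical
  set p : Fin n → EuclideanSpace ℝ (Fin n) := fun i => x (Fin.castLE hk i) with hp
  have hcard : Fintype.card (Fin n) = (n - 1) + 1 := by
    simp only [Fintype.card_fin]; omega
  have hfr : Module.finrank ℝ (vectorSpan ℝ (Set.range p)) ≤ n - 1 :=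
    finrank_vectorSpan_range_le ℝ p hcard
  set V := vectorSpan ℝ (Set.range p) with hV_def
  have hV : V ≠ ⊤ := by
    intro h
    rw [h] at hfr
    rw [finrank_top, finrank_euclideanSpace_fin] at hfr
    omega
  have hVo : Vᗮ ≠ ⊥ := by rwa [Ne, Submodule.orthogonal_eq_bot_iff]
  obtain ⟨v, hvV, hv0⟩ := Submodule.exists_mem_ne_zero_of_ne_bot hVo
  refine ⟨‖v‖⁻¹ • v, ?_, ?_⟩
  · rw [norm_smul, norm_inv, norm_norm, inv_mul_cancel₀ (norm_ne_zero_iff.2 hv0)]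
  · intro i j
    have hmem : p i -ᵥ p j ∈ V := vsub_mem_vectorSpan ℝ (Set.mem_range_self i) (Set.mem_range_self j)
    have h0 : ⟪p i - p j, v⟫ = 0 := hvV _ hmem
    rw [inner_sub_left] at h0
    have h0' : ⟪v, p i⟫ = ⟪v, p j⟫ := by
      have h1 := real_inner_comm v (p i)
      have h2 := real_inner_comm v (p j)
      linarith
    simp only [real_inner_smul_left]
    exact congrArg _ h0'
/-- The width of `C` in the direction of the unit vector `u`. -/
noncomputable def dirWidth (C : Set (EuclideanSpace ℝ (Fin n)))
    (u : EuclideanSpace ℝ (Fin n)) : ℝ :=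
  sSup ((fun x => ⟪u, x⟫) '' C) - sInf ((fun x => ⟪u, x⟫) '' C)

/-- The width of a set `C ⊂ ℝⁿ`. -/
noncomputable def setWidth (C : Set (EuclideanSpace ℝ (Fin n))) : ℝ :=
  sInf (dirWidth C '' {u | ‖u‖ = 1})

/-- The widths `b - a` of planks `{x | a ≤ ⟪u,x⟫ ≤ b}` whose two bounding hyperplanes
both intersect `M`, and whose open interior contains none of the points `x i`. -/
def PlankWidths {k : ℕ} (M : Set (EuclideanSpace ℝ (Fin n)))
    (x : Fin k → EuclideanSpace ℝ (Fin n)) : Set ℝ :=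
  {h | ∃ (u : EuclideanSpace ℝ (Fin n)) (a b : ℝ), ‖u‖ = 1 ∧ a ≤ b ∧ h = b - a ∧
    (∃ p ∈ M, ⟪u, p⟫ = a) ∧ (∃ p ∈ M, ⟪u, p⟫ = b) ∧
    ∀ i : Fin k, ¬ (a < ⟪u, x i⟫ ∧ ⟪u, x i⟫ < b)}

theorem stmt7 {k : ℕ} (hn : 1 ≤ n) (hk : n ≤ k)
    (M : Set (EuclideanSpace ℝ (Fin n))) (hMc : IsCompact M) (hMconv : Convex ℝ M)
    (x : Fin k → EuclideanSpace ℝ (Fin n)) (hx : ∀ i, x i ∈ M)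
    (w : ℝ) (hw : w = setWidth M)
    (H : ℝ) (hH : H = sSup (PlankWidths M x)) :
    w / ((k : ℝ) - (n : ℝ) + 2) ≤ H := by
  classical
  subst hw hH
  obtain ⟨u, hu, hconst⟩ := exists_ortho hn hk x
  set f : EuclideanSpace ℝ (Fin n) → ℝ := fun p => ⟪u, p⟫ with hf_def
  have hf : Continuous f := Continuous.inner continuous_const continuous_id
  have hk0 : 0 < k := lt_of_lt_of_le hn hk
  have hMne : M.Nonempty := ⟨x ⟨0, hk0⟩, hx _⟩
  have hIm : IsCompact (f '' M) := hMc.image hf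
  have hImne : (f '' M).Nonempty := hMne.image f
  set A := sInf (f '' M) with hA_def
  set B := sSup (f '' M) with hB_def
  have hA : A ∈ f '' M := hIm.sInf_mem hImne
  have hB : B ∈ f '' M := hIm.sSup_mem hImne
  have hmemI : ∀ i, A ≤ f (x i) ∧ f (x i) ≤ B := fun i =>
    ⟨csInf_le hIm.bddBelow ⟨_, hx i, rfl⟩, le_csSup hIm.bddAbove ⟨_, hx i, rfl⟩⟩
  have hAB : A ≤ B := le_trans (hmemI ⟨0, hk0⟩).1 (hmemI ⟨0, hk0⟩).2
  set S : Finset ℝ := Finset.image (fun i => f (x i)) Finset.univ with hS_def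
  -- card bound
  set i0 : Fin n := ⟨0, hn⟩ with hi0
  set t : ℝ := f (x (Fin.castLE hk i0)) with ht_def
  have hScard : S.card ≤ k - n + 1 := by
    have hsub : S ⊆ insert t ((Finset.univ.filter (fun i => f (x i) ≠ t)).image
        (fun i => f (x i))) := by
      intro s hs
      simp only [hS_def, Finset.mem_image, Finset.mem_univ, true_and] at hs
      obtain ⟨i, rfl⟩ := hs
      rcases eq_or_ne (f (x i)) t with h | h
      · simp [h]
      · exact Finset.mem_insert_of_mem (Finset.mem_image.2 ⟨i, Finset.mem_filter.2
          ⟨Finset.mem_univ _, h⟩, rfl⟩)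
    have h1 : S.card ≤ ((Finset.univ.filter (fun i => f (x i) ≠ t)).image
        (fun i => f (x i))).card + 1 := by
      calc S.card ≤ _ := Finset.card_le_card hsub
        _ ≤ _ + 1 := Finset.card_insert_le _ _
    have h2 : ((Finset.univ.filter (fun i => f (x i) ≠ t)).image
        (fun i => f (x i))).card ≤ (Finset.univ.filter (fun i => f (x i) ≠ t)).card :=
      Finset.card_image_le
    have h3 : n ≤ (Finset.univ.filter (fun i : Fin k => f (x i) = t)).card := by
      have hsub2 : Finset.univ.image (Fin.castLE hk) ⊆
          Finset.univ.filter (fun i : Fin k => f (x i) = t) := by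
        intro j hj
        simp only [Finset.mem_image, Finset.mem_univ, true_and] at hj
        obtain ⟨i, rfl⟩ := hj
        exact Finset.mem_filter.2 ⟨Finset.mem_univ _, hconst i i0⟩
      calc n = (Finset.univ.image (Fin.castLE hk)).card := by
            rw [Finset.card_image_of_injective _ (Fin.castLE_injective hk)]
            simp
        _ ≤ _ := Finset.card_le_card hsub2
    have h4 : (Finset.univ.filter (fun i : Fin k => f (x i) = t)).card
        + (Finset.univ.filter (fun i => f (x i) ≠ t)).card = k := by
      have h5 := Finset.card_filter_add_card_filter_not
        (s := (Finset.univ : Finset (Fin k))) (p := fun i => f (x i) = t)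
      simpa using h5
    omega
  obtain ⟨a, b, hab, hlen, ha, hb, hgap⟩ := gap_lemma S A B hAB (by
    intro s hs
    simp only [hS_def, Finset.mem_image, Finset.mem_univ, true_and] at hs
    obtain ⟨i, rfl⟩ := hs
    exact hmemI i)
  -- membership in PlankWidths
  have hmemP : b - a ∈ PlankWidths M x := by
    refine ⟨u, a, b, hu, hab, rfl, ?_, ?_, ?_⟩
    · rcases ha with rfl | ha
      · obtain ⟨p, hp, hpa⟩ := hA; exact ⟨p, hp, hpa⟩
      · simp only [hS_def, Finset.mem_image, Finset.mem_univ, true_and] at ha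
        obtain ⟨i, hi⟩ := ha
        exact ⟨x i, hx i, hi⟩
    · rcases hb with rfl | hb
      · obtain ⟨p, hp, hpb⟩ := hB; exact ⟨p, hp, hpb⟩
      · simp only [hS_def, Finset.mem_image, Finset.mem_univ, true_and] at hb
        obtain ⟨i, hi⟩ := hb
        exact ⟨x i, hx i, hi⟩
    · intro i hi
      exact hgap (f (x i)) (Finset.mem_image.2 ⟨i, Finset.mem_univ _, rfl⟩) hi
  -- PlankWidths bounded above
  have hbddP : BddAbove (PlankWidths M x) := by
    obtain ⟨C, hC⟩ := hMc.isBounded.exists_norm_le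
    refine ⟨2 * C, ?_⟩
    rintro h ⟨u', a', b', hu', -, rfl, ⟨p, hp, hpa⟩, ⟨q, hq, hqb⟩, -⟩
    have h1 : |⟪u', q⟫| ≤ ‖q‖ := by
      calc |⟪u', q⟫| ≤ ‖u'‖ * ‖q‖ := abs_real_inner_le_norm u' q
        _ = ‖q‖ := by rw [hu', one_mul]
    have h2 : |⟪u', p⟫| ≤ ‖p‖ := by
      calc |⟪u', p⟫| ≤ ‖u'‖ * ‖p‖ := abs_real_inner_le_norm u' p
        _ = ‖p‖ := by rw [hu', one_mul]
    have := hC p hp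
    have := hC q hq
    rw [← hpa, ← hqb]
    have := abs_le.1 h1
    have := abs_le.1 h2
    linarith
  have hba : b - a ≤ sSup (PlankWidths M x) := le_csSup hbddP hmemP
  -- setWidth ≤ B - A
  have hwBA : setWidth M ≤ B - A := by
    have hbdd : BddBelow (dirWidth M '' {u : EuclideanSpace ℝ (Fin n) | ‖u‖ = 1}) := by
      refine ⟨0, ?_⟩
      rintro r ⟨v, hv, rfl⟩
      have hfv : Continuous fun p : EuclideanSpace ℝ (Fin n) => ⟪v, p⟫ :=
        Continuous.inner continuous_const continuous_id
      have hImv : IsCompact ((fun p => ⟪v, p⟫) '' M) := hMc.image hfv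
      have : sInf ((fun p => ⟪v, p⟫) '' M) ≤ sSup ((fun p => ⟪v, p⟫) '' M) :=
        csInf_le_csSup (hMne.image _) hImv.bddBelow hImv.bddAbove
      simp only [dirWidth]
      linarith
    have hmem : B - A = dirWidth M u := rfl
    rw [hmem]
    exact csInf_le hbdd ⟨u, hu, rfl⟩
  -- conclude
  have hden : (0:ℝ) < (k : ℝ) - (n : ℝ) + 2 := by
    have : (n:ℝ) ≤ (k:ℝ) := Nat.cast_le.2 hk
    linarith
  have hba0 : 0 ≤ b - a := sub_nonneg.2 hab
  have hcard : (S.card : ℝ) + 1 ≤ (k : ℝ) - (n : ℝ) + 2 := by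
    have : ((S.card : ℝ)) ≤ ((k - n + 1 : ℕ) : ℝ) := Nat.cast_le.2 hScard
    rw [Nat.cast_add, Nat.cast_sub hk, Nat.cast_one] at this
    linarith
  have hkey : setWidth M ≤ ((k : ℝ) - (n : ℝ) + 2) * (b - a) := by
    calc setWidth M ≤ B - A := hwBA
      _ ≤ ((S.card : ℝ) + 1) * (b - a) := hlen
      _ ≤ ((k : ℝ) - (n : ℝ) + 2) * (b - a) := by nlinarith
  rw [div_le_iff₀ hden]
  calc setWidth M ≤ ((k : ℝ) - (n : ℝ) + 2) * (b - a) := hkey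
    _ = (b - a) * ((k : ℝ) - (n : ℝ) + 2) := by ring
    _ ≤ sSup (PlankWidths M x) * ((k : ℝ) - (n : ℝ) + 2) := by nlinarith
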